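/- Let f : ℝⁿ → ℝ be continuous on a compact convex set K, strictly concave on the interior, and suppose at every boundary point p ∈ ∂K there is a direction v into the interior with one-sided directional derivative +∞. Then the maximum of f over K is attained at a unique interior point. -/
import Mathlib


open Filter Set

/-- Let `f` be continuous on a compact convex set `K ⊆ ℝⁿ` with nonempty
interior, strictly concave on the interior, and suppose at every boundary
point `p` there is a direction `v` pointing into the interior along which the
one-sided directional derivative of `f` is `+∞`. Then the maximum of `f` on
`K` is attained at a unique point, which lies in the interior. -/
theorem max_attained_interior_unique (n : ℕ) (K : Set (Fin n → ℝ))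
    (hKcpt : IsCompact K) (hKconv : Convex ℝ K)
    (hKint : (interior K).Nonempty)
    (f : (Fin n → ℝ) → ℝ) (hfc : ContinuousOn f K)
    (hconc : StrictConcaveOn ℝ (interior K) f)
    (hbdry : ∀ p ∈ K \ interior K, ∃ v : Fin n → ℝ,
      (∃ ε > 0, ∀ t ∈ Set.Ioo (0:ℝ) ε, p + t • v ∈ interior K) ∧
      Tendsto (fun t : ℝ => (f (p + t • v) - f p) / t)
        (nhdsWithin 0 (Set.Ioi 0)) atTop) :
    ∃ x ∈ interior K, (∀ z ∈ K, f z ≤ f x) ∧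
      ∀ y ∈ K, (∀ z ∈ K, f z ≤ f y) → y = x := by
  have hKne : K.Nonempty := hKint.mono interior_subset
  obtain ⟨x, hxK, hxmax⟩ := hKcpt.exists_isMaxOn hKne hfc
  have key : ∀ p ∈ K, (∀ z ∈ K, f z ≤ f p) → p ∈ interior K := by
    intro p hpK hpmax
    by_contra hpi
    obtain ⟨v, ⟨ε, hε, hεv⟩, htend⟩ := hbdry p ⟨hpK, hpi⟩
    have h1 : ∀ᶠ t in nhdsWithin (0:ℝ) (Ioi 0), (1:ℝ) ≤ (f (p + t • v) - f p) / t :=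
      htend.eventually (eventually_ge_atTop 1)
    have h2 : ∀ᶠ t in nhdsWithin (0:ℝ) (Ioi 0), t ∈ Ioo (0:ℝ) ε :=
      Ioo_mem_nhdsGT_of_mem (by constructor <;> simp [hε])
    obtain ⟨t, ht1, ht2⟩ := (h1.and h2).exists
    have htpos : (0:ℝ) < t := ht2.1
    have hmem := hεv t ht2
    have hstep : t ≤ f (p + t • v) - f p := by
      have := (le_div_iff₀ htpos).mp ht1
      linarith
    have := hpmax _ (interior_subset hmem)
    linarith
  have hxint := key x hxK fun z hz => hxmax hz
  refine ⟨x, hxint, fun z hz => hxmax hz, ?_⟩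
  intro y hyK hymax
  have hyint := key y hyK hymax
  by_contra hne
  have hfy : f y = f x := le_antisymm (hxmax hyK) (hymax x hxK)
  have hlt := hconc.2 hyint hxint hne (by norm_num : (0:ℝ) < 1/2)
    (by norm_num : (0:ℝ) < 1/2) (by norm_num)
  have hmid : (1/2:ℝ) • y + (1/2:ℝ) • x ∈ interior K :=
    hconc.1 hyint hxint (by norm_num) (by norm_num) (by norm_num)
  have hle := hymax _ (interior_subset hmid)
  simp only [smul_eq_mul] at hlt
  linarith
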